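/- Suppose L̃ + θ: TM̃ → ℝ satisfies f₁|v|² + f₂ ≥ (L̃+θ)(q,v) ≥ e₁|v|² − e₂ and the energy satisfies Ẽ(q,v) ≥ g₁|v|² − g₂ for positive constants e₁,e₂,f₁,f₂,g₁,g₂. Then for any W^{1,2} loop q: S¹ → M̃ lifted to γ:[0,T] → M̃ with γ(t) = q(t/T), the partial derivative of the free time action functional with respect to T satisfies ∂S/∂T(q,T) ≤ (g₁f₂/f₁) + g₂ + (1 + g₁/f₁)k − (g₁/(f₁T)) 𝕊_{L̃+θ+k}(q,T), where ∂S/∂T(q,T) = (1/T) ∫₀^T (k − Ẽ(γ,γ̇)) dt and 𝕊_{L̃+θ+k}(q,T) = T ∫₀¹ (L̃(q, q̇/T) + (1/T)θ_q(q̇) + k)dt. -/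

import Mathlib

open MeasureTheory

/-!
STATEMENT 3: Suppose the Lagrangian `L̃ + θ : TM̃ → ℝ` satisfies
`f₁|v|² + f₂ ≥ (L̃+θ)(q,v) ≥ e₁|v|² − e₂` and its energy satisfies `Ẽ(q,v) ≥ g₁|v|² − g₂`
for positive constants `e₁,e₂,f₁,f₂,g₁,g₂`.  Then for any loop `q : S¹ → M̃` (of class `W^{1,2}`,
with velocity field `v`), lifted to `γ : [0,T] → M̃`, `γ(t) = q(t/T)`, one has
`∂S/∂T(q,T) ≤ (g₁f₂/f₁) + g₂ + (1 + g₁/f₁)k − (g₁/(f₁T)) 𝕊_{L̃+θ+k}(q,T)`, where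
`∂S/∂T(q,T) = (1/T)∫₀^T (k − Ẽ(γ,γ̇))dt` and
`𝕊_{L̃+θ+k}(q,T) = T ∫₀¹ (L̃(q, q̇/T) + (1/T) θ_q(q̇) + k) dt`.

We model `M̃` by a type `X` and its (trivialized) tangent spaces by a normed space `F`; the
1-form `θ` is a field of continuous linear functionals.  The velocity `q̇` of the `W^{1,2}` loop
is given as the data `v`.
-/
theorem free_time_action_T_derivative_bound
    {X F : Type*} [NormedAddCommGroup F] [NormedSpace ℝ F]
    (L : X → F → ℝ) (Th : X → F →L[ℝ] ℝ) (En : X → F → ℝ)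
    (e₁ e₂ f₁ f₂ g₁ g₂ : ℝ)
    (he₁ : 0 < e₁) (he₂ : 0 < e₂) (hf₁ : 0 < f₁) (hf₂ : 0 < f₂) (hg₁ : 0 < g₁) (hg₂ : 0 < g₂)
    (hupper : ∀ q v, L q v + Th q v ≤ f₁ * ‖v‖ ^ 2 + f₂)
    (hlower : ∀ q v, e₁ * ‖v‖ ^ 2 - e₂ ≤ L q v + Th q v)
    (hEn : ∀ q v, g₁ * ‖v‖ ^ 2 - g₂ ≤ En q v)
    (k : ℝ) (q : ℝ → X) (v : ℝ → F) (hq : Function.Periodic q 1) (hv : Function.Periodic v 1)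
    (T : ℝ) (hT : 0 < T)
    (hint₁ : IntervalIntegrable (fun t => En (q (t / T)) (T⁻¹ • v (t / T))) volume 0 T)
    (hint₂ : IntervalIntegrable
        (fun t => L (q t) (T⁻¹ • v t) + T⁻¹ * Th (q t) (v t) + k) volume 0 1) :
    (1 / T) * ∫ t in (0:ℝ)..T, (k - En (q (t / T)) (T⁻¹ • v (t / T)))
      ≤ g₁ * f₂ / f₁ + g₂ + (1 + g₁ / f₁) * k
        - g₁ / (f₁ * T) *
            (T * ∫ t in (0:ℝ)..1, (L (q t) (T⁻¹ • v t) + T⁻¹ * Th (q t) (v t) + k)) := by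
  have hTne : T ≠ 0 := hT.ne'
  -- change of variables on the LHS integral
  have hchg : (∫ t in (0:ℝ)..T, (k - En (q (t / T)) (T⁻¹ • v (t / T))))
      = T * ∫ s in (0:ℝ)..1, (k - En (q s) (T⁻¹ • v s)) := by
    have h := intervalIntegral.integral_comp_div (a := 0) (b := T)
      (f := fun s => k - En (q s) (T⁻¹ • v s)) hTne
    simpa [hTne, div_self, smul_eq_mul] using h
  -- integrability of the energy integrand on [0,1]
  have hEint : IntervalIntegrable (fun t => En (q t) (T⁻¹ • v t)) volume 0 1 := by
    have h := hint₁.comp_mul_right (c := T)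
    simp only [zero_div, div_self hTne] at h
    have : (fun x => En (q (x * T / T)) (T⁻¹ • v (x * T / T)))
        = fun x => En (q x) (T⁻¹ • v x) := by
      funext x; rw [mul_div_assoc, div_self hTne, mul_one]
    rwa [this] at h
  -- pointwise bound
  set c : ℝ := g₁ * f₂ / f₁ + g₂ + g₁ / f₁ * k with hc
  have key : ∀ t ∈ Set.Icc (0:ℝ) 1,
      g₁ / f₁ * (L (q t) (T⁻¹ • v t) + T⁻¹ * Th (q t) (v t) + k) - c
        ≤ En (q t) (T⁻¹ • v t) := by
    intro t _
    have h1 := hupper (q t) (T⁻¹ • v t)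
    have h2 := hEn (q t) (T⁻¹ • v t)
    have h3 : Th (q t) (T⁻¹ • v t) = T⁻¹ * Th (q t) (v t) := by
      simp
    rw [h3] at h1
    rw [hc]
    have hfn : f₁ ≠ 0 := hf₁.ne'
    have h4 : g₁ / f₁ * (f₁ * ‖T⁻¹ • v t‖ ^ 2 + f₂)
        = g₁ * ‖T⁻¹ • v t‖ ^ 2 + g₁ * f₂ / f₁ := by
      field_simp
    nlinarith [mul_le_mul_of_nonneg_left h1 (div_pos hg₁ hf₁).le, h4, h2]
  -- integral comparison
  have hLint : IntervalIntegrable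
      (fun t => g₁ / f₁ * (L (q t) (T⁻¹ • v t) + T⁻¹ * Th (q t) (v t) + k) - c) volume 0 1 :=
    (hint₂.const_mul _).sub intervalIntegrable_const
  have hmono := intervalIntegral.integral_mono_on (by norm_num) hLint hEint key
  rw [intervalIntegral.integral_sub (hint₂.const_mul _) intervalIntegrable_const,
    intervalIntegral.integral_const_mul, intervalIntegral.integral_const] at hmono
  simp only [sub_zero, one_smul, smul_eq_mul] at hmono
  set I := ∫ t in (0:ℝ)..1, (L (q t) (T⁻¹ • v t) + T⁻¹ * Th (q t) (v t) + k) with hI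
  set J := ∫ t in (0:ℝ)..1, En (q t) (T⁻¹ • v t) with hJ
  have hsplit : (∫ s in (0:ℝ)..1, (k - En (q s) (T⁻¹ • v s))) = k - J := by
    rw [intervalIntegral.integral_sub intervalIntegrable_const hEint,
      intervalIntegral.integral_const]
    simp [hJ]
  rw [hchg, hsplit]
  have h1T : (1 / T) * (T * (k - J)) = k - J := by field_simp
  have h2T : g₁ / (f₁ * T) * (T * I) = g₁ / f₁ * I := by field_simp
  rw [h1T, h2T]
  rw [hc] at hmono
  linarith
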